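/- Let r ≥ 3, t ≥ 1 and n > 2(r−1)². Then χ^e(K_n^r(t)) = 2, where K_n^r(t) is the complete r-uniform n-partite hypergraph with all parts of size t. -/

import Mathlib

open Finset

open Classical in
/-- `σ^e(v) = Σ_{e ∋ v} w(e)` for a hypergraph with edge set `E`. -/
noncomputable def sigmaE {V : Type*} [Fintype V] (E : Finset (Finset V))
    (w : Finset V → ℕ) (v : V) : ℕ :=
  ∑ e ∈ E.filter (fun e => v ∈ e), w e

/-- The hypergraph with edge set `E` admits an edge weighting with weights in
`{1,…,k}` such that `σ^e` is a proper vertex coloring: every edge with at least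
two vertices contains two vertices with distinct colors. -/
def HasNSDEdgeWeighting {V : Type*} [Fintype V] (E : Finset (Finset V)) (k : ℕ) : Prop :=
  ∃ w : Finset V → ℕ, (∀ e ∈ E, 1 ≤ w e ∧ w e ≤ k) ∧
    ∀ e ∈ E, 2 ≤ e.card → ∃ u ∈ e, ∃ v ∈ e, sigmaE E w u ≠ sigmaE E w v

/-- The edge set of the complete `r`-uniform `n`-partite hypergraph with parts
`{i} × Fin t` (`i : Fin n`), each of size `t`: all `r`-element subsets of the
vertex set containing at most one vertex from each part. -/
def completePartiteEdges (n r t : ℕ) : Finset (Finset (Fin n × Fin t)) :=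
  (Finset.univ.powersetCard r).filter
    (fun e => ∀ u ∈ e, ∀ v ∈ e, u ≠ v → (u : Fin n × Fin t).1 ≠ v.1)

lemma sigmaE_eq {V : Type*} [Fintype V] [DecidableEq V] (E : Finset (Finset V))
    (w : Finset V → ℕ) (v : V) :
    sigmaE E w v = ∑ e ∈ E.filter (fun e => v ∈ e), w e := by
  rw [sigmaE]
  exact Finset.sum_congr (by congr) (fun _ _ => rfl)

namespace ChiEAux
variable {n r t : ℕ}

lemma mem_cpe {e : Finset (Fin n × Fin t)} :
    e ∈ completePartiteEdges n r t ↔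
      e.card = r ∧ ∀ u ∈ e, ∀ v ∈ e, u ≠ v → (u : Fin n × Fin t).1 ≠ v.1 := by
  simp [completePartiteEdges, Finset.mem_powersetCard, Finset.subset_univ]

lemma image_swap_mem (u v : Fin n × Fin t) {e : Finset (Fin n × Fin t)}
    (he : e ∈ completePartiteEdges n r t) :
    e.image (Equiv.prodCongr (Equiv.swap u.1 v.1) (Equiv.swap u.2 v.2)) ∈
      completePartiteEdges n r t := by
  rw [mem_cpe] at he ⊢
  obtain ⟨hc, hd⟩ := he
  refine ⟨by rw [Finset.card_image_of_injective _ (Equiv.injective _)]; exact hc, ?_⟩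
  intro a ha b hb hab
  simp only [mem_image] at ha hb
  obtain ⟨a', ha', rfl⟩ := ha; obtain ⟨b', hb', rfl⟩ := hb
  have hab' : a' ≠ b' := fun h => hab (by rw [h])
  have h1 := hd a' ha' b' hb' hab'
  simp only [Equiv.prodCongr_apply, Prod.map_fst]
  exact fun h => h1 ((Equiv.swap u.1 v.1).injective h)

lemma deg_le (u v : Fin n × Fin t) :
    ((completePartiteEdges n r t).filter (fun e => u ∈ e)).card ≤
    ((completePartiteEdges n r t).filter (fun e => v ∈ e)).card := by
  set π := Equiv.prodCongr (Equiv.swap u.1 v.1) (Equiv.swap u.2 v.2) with hπ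
  have hππ : ∀ z, π (π z) = z := by
    intro z
    simp [hπ, Equiv.prodCongr_apply, Prod.map, Equiv.swap_apply_self]
  apply Finset.card_le_card_of_injOn (fun e => e.image π)
  · intro e he
    simp only [mem_filter, Finset.mem_coe] at he ⊢
    refine ⟨image_swap_mem u v he.1, ?_⟩
    refine mem_image.2 ⟨u, he.2, ?_⟩
    simp [hπ, Equiv.prodCongr_apply, Prod.map, Equiv.swap_apply_left]
  · intro e he e' he' h
    have himg : ∀ s : Finset (Fin n × Fin t), (s.image π).image π = s := by
      intro s; ext a
      simp only [Finset.mem_image]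
      constructor
      · rintro ⟨b, ⟨c, hc, rfl⟩, rfl⟩; rwa [hππ]
      · intro ha; exact ⟨π a, ⟨a, ha, rfl⟩, hππ a⟩
    have h2 := congrArg (Finset.image (⇑π)) h
    simp only at h2
    rw [himg, himg] at h2
    exact h2

lemma deg_const (u v : Fin n × Fin t) :
    ((completePartiteEdges n r t).filter (fun e => u ∈ e)).card =
    ((completePartiteEdges n r t).filter (fun e => v ∈ e)).card :=
  le_antisymm (deg_le u v) (deg_le v u)


/-- number of `x : Fin n` with value `< K` -/
lemma card_val_lt {K : ℕ} (hK : K ≤ n) :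
    ((univ : Finset (Fin n)).filter (fun x => x.val < K)).card = K := by
  have key : (Finset.range K).card =
      ((univ : Finset (Fin n)).filter (fun x => x.val < K)).card := by
    refine Finset.card_bij (fun k hk => (⟨k, lt_of_lt_of_le (Finset.mem_range.1 hk) hK⟩ : Fin n))
      ?_ ?_ ?_
    · intro a ha; simp [Finset.mem_range.1 ha]
    · intro a ha b hb hab
      simpa [Fin.mk.injEq] using hab
    · intro b hb
      simp only [mem_filter, mem_univ, true_and] at hb
      exact ⟨b.val, Finset.mem_range.2 hb, by simp⟩
  rw [← key, Finset.card_range]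

lemma card_block {q m j : ℕ} (hq : 0 < q) (hj : j < m) (hmq : m * q ≤ n) :
    ((univ : Finset (Fin n)).filter (fun p => p.val / q = j)).card = q := by
  have key : (Finset.range q).card =
      ((univ : Finset (Fin n)).filter (fun p => p.val / q = j)).card := by
    have hbound : ∀ k, k ∈ Finset.range q → j * q + k < n := by
      intro k hk
      have hk' : k < q := Finset.mem_range.1 hk
      have h2 : (j + 1) * q ≤ m * q := Nat.mul_le_mul_right _ hj
      calc j * q + k < j * q + q := by omega
        _ = (j + 1) * q := by ring
        _ ≤ n := le_trans h2 hmq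
    refine Finset.card_bij (fun k hk => (⟨j * q + k, hbound k hk⟩ : Fin n)) ?_ ?_ ?_
    · intro a ha
      have ha' : a < q := Finset.mem_range.1 ha
      simp only [mem_filter, mem_univ, true_and]
      rw [show j * q + a = a + j * q by ring, Nat.add_mul_div_right _ _ hq,
        Nat.div_eq_of_lt ha', zero_add]
    · intro a ha b hb hab
      simpa [Fin.mk.injEq] using hab
    · intro b hb
      simp only [mem_filter, mem_univ, true_and] at hb
      have h1 := Nat.div_add_mod b.val q
      have h2 := Nat.mod_lt b.val hq
      refine ⟨b.val % q, Finset.mem_range.2 h2, ?_⟩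
      have h3 : j * q = q * (b.val / q) := by rw [hb]; ring
      apply Fin.ext
      simp only
      omega
  rw [← key, Finset.card_range]

lemma card_block_le {q : ℕ} (hq : 0 < q) (i : ℕ) :
    ((univ : Finset (Fin n)).filter (fun p => p.val / q = i)).card ≤ q := by
  have key : ((univ : Finset (Fin n)).filter (fun p => p.val / q = i)).card ≤
      (Finset.range q).card := by
    apply Finset.card_le_card_of_injOn (fun p => p.val % q)
    · intro p _; exact Finset.mem_range.2 (Nat.mod_lt _ hq)
    · intro a ha b hb hab
      simp only [coe_filter, Set.mem_setOf_eq] at ha hb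
      simp only at hab
      have h1 := Nat.div_add_mod a.val q
      have h2 := Nat.div_add_mod b.val q
      have hd : a.val / q = b.val / q := by rw [ha.2, hb.2]
      rw [hd] at h1
      apply Fin.ext
      omega
  rwa [Finset.card_range] at key

/-- the special weight-2 edges: block `j` together with one extra vertex,
all with the same second coordinate. -/
def encE (n t q : ℕ) (z : ℕ × Fin n × Fin t) : Finset (Fin n × Fin t) :=
  insert z.2 (((univ : Finset (Fin n)).filter (fun p => p.val / q = z.1)).image
    (fun p => (p, z.2.2)))

lemma mem_encE {q : ℕ} {j : ℕ} {x p : Fin n} {c c' : Fin t} :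
    (p, c) ∈ encE n t q (j, x, c') ↔ c' = c ∧ (p = x ∨ p.val / q = j) := by
  simp only [encE, Finset.mem_insert, Finset.mem_image, mem_filter, mem_univ, true_and,
    Prod.mk.injEq]
  constructor
  · rintro (⟨h1, h2⟩ | ⟨b, hb, h1, h2⟩)
    · exact ⟨h2.symm, Or.inl h1⟩
    · exact ⟨h2, Or.inr (h1 ▸ hb)⟩
  · rintro ⟨rfl, (rfl | h)⟩
    · exact Or.inl ⟨rfl, rfl⟩
    · exact Or.inr ⟨p, h, rfl, rfl⟩

lemma snd_of_mem_encE {q : ℕ} {z : ℕ × Fin n × Fin t} {a : Fin n × Fin t}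
    (h : a ∈ encE n t q z) : a.2 = z.2.2 := by
  simp only [encE, Finset.mem_insert, Finset.mem_image] at h
  rcases h with rfl | ⟨b, _, rfl⟩ <;> rfl

lemma encE_mem {q m : ℕ} (hq : 2 ≤ q) (hrq : r = q + 1) (hmq : m * q ≤ n)
    {z : ℕ × Fin n × Fin t} (hzm : z.1 < m) (hzx : z.2.1.val / q < z.1) :
    encE n t q z ∈ completePartiteEdges n r t := by
  obtain ⟨j, x, c⟩ := z
  simp only at hzm hzx
  rw [mem_cpe]
  constructor
  · rw [encE]
    have hx : (x, c) ∉ ((univ : Finset (Fin n)).filter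
        (fun p => p.val / q = j)).image (fun p => (p, c)) := by
      simp only [Finset.mem_image, mem_filter, mem_univ, true_and, Prod.mk.injEq, not_exists]
      rintro b ⟨hb, rfl, -⟩
      omega
    rw [Finset.card_insert_of_notMem hx,
      Finset.card_image_of_injective _ (fun a b h => by simpa using h),
      card_block (by omega) hzm hmq]
    omega
  · intro u hu v hv huv
    intro h1
    apply huv
    have h2 := snd_of_mem_encE hu
    have h3 := snd_of_mem_encE hv
    exact Prod.ext h1 (h2.trans h3.symm)

lemma encE_injOn {q m : ℕ} (hq : 2 ≤ q) (hmq : m * q ≤ n) :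
    Set.InjOn (encE n t q)
      (((Finset.range m) ×ˢ (univ : Finset (Fin n × Fin t))).filter
        (fun z => z.2.1.val / q < z.1)) := by
  rintro ⟨j, x, c⟩ hz ⟨j', x', c'⟩ hz' heq
  simp only [coe_filter, Set.mem_setOf_eq, Finset.mem_product, Finset.mem_range, mem_univ,
    and_true] at hz hz'
  obtain ⟨hjm, hxj⟩ := hz
  obtain ⟨hjm', hxj'⟩ := hz'
  -- second coordinate
  have hxc : (x, c) ∈ encE n t q (j, x, c) := by rw [mem_encE]; exact ⟨rfl, Or.inl rfl⟩
  have hcc : c' = c := by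
    rw [heq] at hxc
    exact (snd_of_mem_encE hxc).symm
  -- block index
  have hb1 : j * q < n := by
    have h2 : (j + 1) * q ≤ m * q := Nat.mul_le_mul_right _ hjm
    nlinarith
  have hb2 : j * q + 1 < n := by
    have h2 : (j + 1) * q ≤ m * q := Nat.mul_le_mul_right _ hjm
    have : j * q + 2 ≤ (j+1) * q := by nlinarith
    omega
  have hdiva : (j * q) / q = j := by
    rw [Nat.mul_div_cancel _ (by omega : 0 < q)]
  have hdivb : (j * q + 1) / q = j := by
    rw [show j * q + 1 = 1 + j * q by ring, Nat.add_mul_div_right _ _ (by omega : 0 < q),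
      Nat.div_eq_of_lt (by omega)]
    omega
  have ha : ((⟨j * q, hb1⟩ : Fin n), c) ∈ encE n t q (j, x, c) := by
    rw [mem_encE]; exact ⟨rfl, Or.inr hdiva⟩
  have hbmem : ((⟨j * q + 1, hb2⟩ : Fin n), c) ∈ encE n t q (j, x, c) := by
    rw [mem_encE]; exact ⟨rfl, Or.inr hdivb⟩
  rw [heq, hcc] at ha hbmem
  rw [mem_encE] at ha hbmem
  have hjj : j = j' := by
    rcases ha.2 with h | h
    · rcases hbmem.2 with h' | h'
      · exfalso
        have : (⟨j * q, hb1⟩ : Fin n) = (⟨j * q + 1, hb2⟩ : Fin n) := h.trans h'.symm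
        simp [Fin.mk.injEq] at this
      · simpa using (h'.symm.trans hdivb).symm
    · simpa using (h.symm.trans hdiva).symm
  subst hjj
  -- extra vertex
  have hx2 : (x, c) ∈ encE n t q (j, x', c) := by
    rw [hcc] at heq
    rw [← heq, mem_encE]
    exact ⟨rfl, Or.inl rfl⟩
  rw [mem_encE] at hx2
  have hxx : x = x' := by
    rcases hx2.2 with h | h
    · exact h
    · omega
  rw [hcc, hxx]

lemma s_count {q m : ℕ} (hq : 2 ≤ q) (hmq : m * q ≤ n) (p : Fin n) (c : Fin t) :
    ((((Finset.range m) ×ˢ (univ : Finset (Fin n × Fin t))).filter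
        (fun z => z.2.1.val / q < z.1)).filter
          (fun z => (p, c) ∈ encE n t q z)).card
      = if p.val / q < m then (m - (p.val / q + 1)) + (p.val / q) * q else 0 := by
  set i := p.val / q with hi
  by_cases him : i < m
  · rw [if_pos him]
    have hset : (((Finset.range m) ×ˢ (univ : Finset (Fin n × Fin t))).filter
        (fun z => z.2.1.val / q < z.1)).filter (fun z => (p, c) ∈ encE n t q z)
      = ((Finset.Ico (i + 1) m).image (fun j => (j, p, c)))
        ∪ (((univ : Finset (Fin n)).filter (fun x => x.val / q < i)).image
            (fun x => ((i : ℕ), x, c))) := by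
      ext z
      obtain ⟨j, x, c'⟩ := z
      simp only [Finset.filter_filter, mem_filter, Finset.mem_product, Finset.mem_range,
        mem_univ, and_true, true_and, mem_encE, Finset.mem_union, Finset.mem_image,
        Finset.mem_Ico, Prod.mk.injEq]
      constructor
      · rintro ⟨hjm, hxj, rfl, (rfl | hpj)⟩
        · exact Or.inl ⟨j, ⟨by omega, hjm⟩, rfl, rfl, rfl⟩
        · refine Or.inr ⟨x, ?_, by omega, rfl, rfl⟩
          omega
      · rintro (⟨j', ⟨hj1, hj2⟩, rfl, rfl, rfl⟩ | ⟨x', hx', rfl, rfl, rfl⟩)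
        · exact ⟨hj2, by omega, rfl, Or.inl rfl⟩
        · exact ⟨him, hx', rfl, Or.inr (by omega)⟩
    rw [hset, Finset.card_union_of_disjoint, Finset.card_image_of_injective _
        (fun a b h => by simpa using h),
      Finset.card_image_of_injective _ (fun a b h => by simpa using h),
      Nat.card_Ico]
    · congr 1
      have hfeq : ((univ : Finset (Fin n)).filter (fun x => x.val / q < i))
          = ((univ : Finset (Fin n)).filter (fun x => x.val < i * q)) := by
        apply Finset.filter_congr
        intro x _
        rw [Nat.div_lt_iff_lt_mul (by omega : 0 < q)]
      rw [hfeq, card_val_lt]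
      have : i * q ≤ m * q := Nat.mul_le_mul_right _ (le_of_lt him)
      omega
    · rw [Finset.disjoint_left]
      rintro a ha hb
      simp only [Finset.mem_image, Finset.mem_Ico, mem_filter, mem_univ, true_and] at ha hb
      obtain ⟨j', ⟨hj1, _⟩, rfl⟩ := ha
      obtain ⟨x', _, hx2⟩ := hb
      have : i = j' := congrArg Prod.fst hx2
      omega
  · rw [if_neg him]
    rw [Finset.card_eq_zero, Finset.eq_empty_iff_forall_notMem]
    rintro ⟨j, x, c'⟩ hz
    simp only [Finset.filter_filter, mem_filter, Finset.mem_product, Finset.mem_range,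
      mem_univ, and_true, true_and, mem_encE] at hz
    obtain ⟨hjm, hxj, _, (rfl | hpj)⟩ := hz
    · omega
    · omega

lemma sum_w {F : Finset (Finset (Fin n × Fin t))} (s : Finset (Finset (Fin n × Fin t))) :
    (∑ e ∈ s, if e ∈ F then (2 : ℕ) else 1)
      = s.card + (s.filter (fun e => e ∈ F)).card := by
  have h1 : (∑ e ∈ s, if e ∈ F then (2 : ℕ) else 1)
      = ∑ e ∈ s, (1 + if e ∈ F then (1 : ℕ) else 0) := by
    apply Finset.sum_congr rfl
    intro e _
    by_cases h : e ∈ F <;> simp [h]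
  rw [h1, Finset.sum_add_distrib, Finset.sum_const, smul_eq_mul, mul_one]
  congr 1
  rw [Finset.sum_boole]
  simp

lemma vv_ne {q m : ℕ} (hq : 2 ≤ q) (hm2 : 2 ≤ m) {i i' : ℕ} (hi : i ≤ m) (hi' : i' ≤ m)
    (hne : i ≠ i') :
    (if i < m then (m - (i + 1)) + i * q else 0)
      ≠ (if i' < m then (m - (i' + 1)) + i' * q else 0) := by
  have key : ∀ a b : ℕ, a < b → b ≤ m →
      (if a < m then (m - (a + 1)) + a * q else 0)
        ≠ (if b < m then (m - (b + 1)) + b * q else 0) := by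
    intro a b hab hbm
    have ham : a < m := lt_of_lt_of_le hab hbm
    rw [if_pos ham]
    by_cases hbm' : b < m
    · rw [if_pos hbm']
      have h4 : a * q + (b - a) * q = b * q := by
        rw [← Nat.add_mul, Nat.add_sub_cancel' (le_of_lt hab)]
      have h5 : (b - a) * 2 ≤ (b - a) * q := Nat.mul_le_mul_left _ hq
      omega
    · rw [if_neg hbm']
      have h2 : a = 0 ∨ q ≤ a * q := by
        rcases Nat.eq_zero_or_pos a with h | h
        · exact Or.inl h
        · exact Or.inr (by nlinarith)
      omega
  rcases Nat.lt_or_ge i i' with h | h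
  · exact key i i' h hi'
  · exact (key i' i (by omega) hi).symm

end ChiEAux

open ChiEAux

/-- For `r ≥ 3`, `t ≥ 1` and `n > 2(r-1)²`, `χ^e(K_n^r(t)) = 2`. -/
theorem chiE_completePartiteHypergraph (n r t : ℕ) (hr : 3 ≤ r) (ht : 1 ≤ t)
    (hn : 2 * (r - 1) ^ 2 < n) :
    IsLeast {k : ℕ | 0 < k ∧ HasNSDEdgeWeighting (completePartiteEdges n r t) k} 2 := by
  set E := completePartiteEdges n r t with hE
  set q := r - 1 with hqdef
  have hq : 2 ≤ q := by omega
  have hrq : r = q + 1 := by omega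
  set m := n / q with hmdef
  have hmq : m * q ≤ n := by rw [hmdef]; exact Nat.div_mul_le_self n q
  have hm2 : 2 ≤ m := by
    rw [hmdef, Nat.le_div_iff_mul_le (by omega : 0 < q)]
    have : q ^ 2 = q * q := by ring
    nlinarith
  have hrn : r ≤ n := by nlinarith
  -- degree of a vertex (same for all vertices)
  have hdeg := fun (u v : Fin n × Fin t) => deg_const (r := r) u v
  constructor
  · -- 2 is achievable
    refine ⟨by norm_num, ?_⟩
    set I : Finset (ℕ × Fin n × Fin t) :=
      ((Finset.range m) ×ˢ (univ : Finset (Fin n × Fin t))).filter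
        (fun z => z.2.1.val / q < z.1) with hI
    set F : Finset (Finset (Fin n × Fin t)) := I.image (encE n t q) with hF
    have hFE : F ⊆ E := by
      intro e he
      obtain ⟨z, hz, rfl⟩ := Finset.mem_image.1 he
      rw [hI, mem_filter, Finset.mem_product, Finset.mem_range] at hz
      exact encE_mem hq hrq hmq hz.1.1 hz.2
    refine ⟨fun e => if e ∈ F then 2 else 1, ?_, ?_⟩
    · intro e _
      by_cases h : e ∈ F <;> simp [h]
    · intro e he _
      -- sigma decomposition
      have hsig : ∀ x : Fin n × Fin t,
          sigmaE E (fun e => if e ∈ F then 2 else 1) x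
            = (E.filter (fun e => x ∈ e)).card
              + (if x.1.val / q < m then (m - (x.1.val / q + 1)) + (x.1.val / q) * q
                  else 0) := by
        intro x
        have himg : (E.filter (fun e => x ∈ e)).filter (fun e => e ∈ F)
            = (I.filter (fun z => x ∈ encE n t q z)).image (encE n t q) := by
          ext e'
          simp only [mem_filter, Finset.mem_image]
          constructor
          · rintro ⟨⟨hE', hx⟩, hF'⟩
            obtain ⟨z, hz, rfl⟩ := Finset.mem_image.1 hF'
            exact ⟨z, ⟨hz, hx⟩, rfl⟩
          · rintro ⟨z, ⟨hz, hx⟩, rfl⟩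
            refine ⟨⟨hFE (Finset.mem_image.2 ⟨z, hz, rfl⟩), hx⟩,
              Finset.mem_image.2 ⟨z, hz, rfl⟩⟩
        have h2 : ((E.filter (fun e => x ∈ e)).filter (fun e => e ∈ F)).card
            = (if x.1.val / q < m then (m - (x.1.val / q + 1)) + (x.1.val / q) * q
                else 0) := by
          rw [himg, Finset.card_image_of_injOn
            ((encE_injOn hq hmq).mono (by
              intro z hz
              simp only [Finset.mem_coe, mem_filter] at hz
              exact Finset.mem_coe.2 hz.1))]
          obtain ⟨p, c⟩ := x
          exact s_count hq hmq p c
        rw [sigmaE_eq, sum_w, h2]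
      -- pick two vertices in different blocks
      have hec := mem_cpe.1 he
      have hex : ∃ u ∈ e, ∃ v ∈ e, u.1.val / q ≠ v.1.val / q := by
        by_contra hcon
        push_neg at hcon
        have hne : e.Nonempty := by
          rw [← Finset.card_pos, hec.1]; omega
        obtain ⟨a, ha⟩ := hne
        have hsub : e.image Prod.fst ⊆
            ((univ : Finset (Fin n)).filter (fun p => p.val / q = a.1.val / q)) := by
          intro p hp
          obtain ⟨u, hu, rfl⟩ := Finset.mem_image.1 hp
          simp only [mem_filter, mem_univ, true_and]
          exact hcon u hu a ha
        have hcardim : (e.image Prod.fst).card = r := by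
          rw [Finset.card_image_of_injOn, hec.1]
          intro u hu v hv huv
          by_contra hne'
          exact hec.2 u hu v hv hne' huv
        have h1 := Finset.card_le_card hsub
        have h2 := card_block_le (n := n) (by omega : 0 < q) (a.1.val / q)
        omega
      obtain ⟨u, hu, v, hv, huv⟩ := hex
      refine ⟨u, hu, v, hv, ?_⟩
      rw [hsig u, hsig v]
      have hdm : u.1.val / q ≤ m := by
        rw [hmdef]; exact Nat.div_le_div_right (le_of_lt u.1.isLt)
      have hdm' : v.1.val / q ≤ m := by
        rw [hmdef]; exact Nat.div_le_div_right (le_of_lt v.1.isLt)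
      have hvv := vv_ne hq hm2 hdm hdm' huv
      have hdd : (E.filter (fun e => u ∈ e)).card = (E.filter (fun e => v ∈ e)).card :=
        hdeg u v
      omega
  · -- lower bound
    intro k hk
    by_contra hk2
    push_neg at hk2
    obtain ⟨hk0, w, hwb, hwp⟩ := hk
    have hk1 : k = 1 := by omega
    subst hk1
    -- an edge exists
    set e₀ : Finset (Fin n × Fin t) :=
      ((univ : Finset (Fin n)).filter (fun i => i.val < r)).image
        (fun i => (i, (⟨0, ht⟩ : Fin t))) with he₀def
    have he₀ : e₀ ∈ E := by
      rw [hE, mem_cpe]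
      constructor
      · rw [he₀def, Finset.card_image_of_injective _ (fun a b h => by simpa using h),
          card_val_lt hrn]
      · intro a ha b hb hab
        rw [he₀def] at ha hb
        obtain ⟨i, _, rfl⟩ := Finset.mem_image.1 ha
        obtain ⟨i', _, rfl⟩ := Finset.mem_image.1 hb
        intro h
        simp only at h
        exact hab (by rw [h])
    have hcard0 : 2 ≤ e₀.card := by
      rw [he₀def, Finset.card_image_of_injective _ (fun a b h => by simpa using h),
        card_val_lt hrn]
      omega
    obtain ⟨u, hu, v, hv, hne⟩ := hwp e₀ he₀ hcard0
    apply hne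
    have hsig1 : ∀ x : Fin n × Fin t,
        sigmaE E w x = (E.filter (fun e => x ∈ e)).card := by
      intro x
      rw [sigmaE_eq, Finset.card_eq_sum_ones]
      apply Finset.sum_congr rfl
      intro e' he'
      have := hwb e' (Finset.mem_filter.1 he').1
      omega
    rw [hsig1 u, hsig1 v]
    exact hdeg u v
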